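/- arXiv:2509.04025 — 3 statements merged into one kernel-verified Lean document; each statement's English description precedes it below -/
import Mathlib

section
/- For the boost A_φ and any (t,x) ∈ ℝ_{≥0} × ℝ³, one has (1/√2)(cosh φ - |sinh φ|)(t + |x|) ≤ A⁰_φ(t,x) + |Aˢ_φ(t,x)| ≤ (cosh φ + |sinh φ|)(t + |x|), where A⁰_φ, Aˢ_φ denote time and spatial components of A_φ(t,x). -/
noncomputable def boost (φ : ℝ) : Matrix (Fin 4) (Fin 4) ℝ :=
  !![Real.cosh φ, Real.sinh φ, 0, 0;
     Real.sinh φ, Real.cosh φ, 0, 0;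
     0, 0, 1, 0;
     0, 0, 0, 1]

/-- Scalar core of the lower bound, in the branch where squaring is valid. -/
theorem key_lower (c s a t u N p r2 : ℝ) (hc2 : c^2 = s^2 + 1) (ha : a^2 = s^2) (ha0 : 0 ≤ a)
    (hc1 : 1 ≤ c) (ht : 0 ≤ t) (hN0 : 0 ≤ N) (hN2 : N^2 = u^2 + p)
    (hr2 : r2^2 = 2) (hr21 : 1 ≤ r2)
    (hsuN : -(a*N) ≤ s*u)
    (hq : 0 ≤ (c-a)*(t+N) - r2*(c*t+s*u)) :
    ((c-a)*(t+N) - r2*(c*t+s*u))^2 ≤ 2*((s*t+c*u)^2 + p) := by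
  set e := c - a with he_def
  have hea : e*(c+a) = 1 := by rw [he_def]; linear_combination hc2 - ha
  have he0 : 0 < e := by nlinarith
  have he1 : e ≤ 1 := by nlinarith
  have hr2pos : (0:ℝ) < r2 := by linarith
  have hr2lt : r2 < 3/2 := by nlinarith
  have hr2gt : 4/3 < r2 := by nlinarith
  have h2ec : 2*(e*c) = e^2 + 1 := by linear_combination hea
  have h2ea : 2*(e*a) = 1 - e^2 := by linear_combination hea
  have hC : 0 ≤ N*(e + r2*a) - t*(r2*c - e) := by
    nlinarith [mul_le_mul_of_nonneg_left hsuN hr2pos.le]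
  have hPpos : 0 < (2-r2) - e^2*(r2-1) := by nlinarith
  have hrce : 0 < r2*c - e := by nlinarith [mul_le_mul_of_nonneg_left hc1 hr2pos.le]
  have hDN : N*((r2*c-e)*((2-r2)+e^2*(r2-1)) - (e + r2*a)*((2-r2) - e^2*(r2-1)))
      = N*((3*r2-4)*e) := by linear_combination (N*r2*(r2-1)*e)*hea
  have key2 : t*((2-r2) - e^2*(r2-1)) ≤ N*((2-r2)+e^2*(r2-1)) := by
    have hf1 : 0 ≤ (N*(e + r2*a) - t*(r2*c - e)) * ((2-r2) - e^2*(r2-1)) :=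
      mul_nonneg hC hPpos.le
    have hf2 : 0 ≤ N*((3*r2-4)*e) :=
      mul_nonneg hN0 (mul_nonneg (by linarith) he0.le)
    have hprod : 0 ≤ (N*((2-r2)+e^2*(r2-1)) - t*((2-r2) - e^2*(r2-1))) * (r2*c-e) := by
      have expand : (N*((2-r2)+e^2*(r2-1)) - t*((2-r2) - e^2*(r2-1))) * (r2*c-e)
          = N*((r2*c-e)*((2-r2)+e^2*(r2-1)) - (e + r2*a)*((2-r2) - e^2*(r2-1)))
            + (N*(e + r2*a) - t*(r2*c - e)) * ((2-r2) - e^2*(r2-1)) := by ring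
      rw [expand, hDN]
      exact add_nonneg hf2 hf1
    have := (mul_nonneg_iff_of_pos_right hrce).mp hprod
    linarith
  have h2re0 : (0:ℝ) ≤ 2*r2*e := by positivity
  have h1 : e^2*(t+N) - 2*r2*e*(c*t+s*u) ≤ t*(e^2 - 2*r2*(e*c)) + N*(e^2 + 2*r2*(e*a)) := by
    linarith [mul_le_mul_of_nonneg_left hsuN h2re0]
  have h2 : t*(e^2 - 2*r2*(e*c)) + N*(e^2 + 2*r2*(e*a))
      = t*(e^2 - r2*(e^2+1)) + N*(e^2 + r2*(1-e^2)) := by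
    linear_combination (-(r2*t))*h2ec + (r2*N)*h2ea
  have h3 : t*(e^2 - r2*(e^2+1)) + N*(e^2 + r2*(1-e^2)) ≤ 2*(N-t) := by linarith [key2]
  have hstar : e^2*(t+N) - 2*r2*e*(c*t+s*u) ≤ 2*(N-t) := by
    rw [h2] at h1; linarith
  have hmul : (e^2*(t+N) - 2*r2*e*(c*t+s*u))*(t+N) ≤ 2*(N-t)*(t+N) :=
    mul_le_mul_of_nonneg_right hstar (by linarith)
  calc (e*(t+N) - r2*(c*t+s*u))^2
      = (e^2*(t+N) - 2*r2*e*(c*t+s*u))*(t+N) + r2^2*(c*t+s*u)^2 := by ring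
    _ ≤ 2*(N-t)*(t+N) + r2^2*(c*t+s*u)^2 := by linarith [hmul]
    _ = 2*((s*t+c*u)^2 + p) := by
        linear_combination 2*hN2 + (2*t^2-2*u^2)*hc2 + (c*t+s*u)^2*hr2

theorem le_of_sq_le_sq_aux (x y : ℝ) (hy : 0 ≤ y) (h : x^2 ≤ y^2) : x ≤ y := by
  nlinarith [h, hy]

set_option maxHeartbeats 1600000 in
theorem boost_null_coordinate_bounds (φ : ℝ) (t : ℝ) (ht : 0 ≤ t) (x : Fin 3 → ℝ) :
    let X : Fin 4 → ℝ := ![t, x 0, x 1, x 2]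
    let X' : Fin 4 → ℝ := (boost φ).mulVec X
    let normx : ℝ := Real.sqrt ((x 0) ^ 2 + (x 1) ^ 2 + (x 2) ^ 2)
    let normx' : ℝ := Real.sqrt ((X' 1) ^ 2 + (X' 2) ^ 2 + (X' 3) ^ 2)
    (1 / Real.sqrt 2) * (Real.cosh φ - |Real.sinh φ|) * (t + normx) ≤ X' 0 + normx' ∧
    X' 0 + normx' ≤ (Real.cosh φ + |Real.sinh φ|) * (t + normx) := by
  intro X X' normx normx'
  have hc2 : Real.cosh φ ^2 = Real.sinh φ ^2 + 1 := by rw [Real.cosh_sq]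
  set c := Real.cosh φ with hc_def
  set s := Real.sinh φ with hs_def
  set a := |s| with ha_def
  set u := x 0 with hu_def
  set p := (x 1)^2 + (x 2)^2 with hp_def
  have ha : a^2 = s^2 := sq_abs s
  have ha0 : 0 ≤ a := abs_nonneg s
  have hc1 : 1 ≤ c := Real.one_le_cosh φ
  have hp0 : 0 ≤ p := by positivity
  have h0 : X' 0 = c*t + s*u := by
    simp only [X', X]
    simp [boost, Matrix.mulVec, dotProduct, Fin.sum_univ_four]
    rfl
  have h1 : X' 1 = s*t + c*u := by
    simp only [X', X]
    simp [boost, Matrix.mulVec, dotProduct, Fin.sum_univ_four]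
    rfl
  have h2 : X' 2 = x 1 := by
    simp only [X', X]
    simp [boost, Matrix.mulVec, dotProduct, Fin.sum_univ_four]
  have h3 : X' 3 = x 2 := by
    simp only [X', X]
    simp [boost, Matrix.mulVec, dotProduct, Fin.sum_univ_four]
  have hnx : normx = Real.sqrt (u^2 + p) := by
    simp only [normx, hu_def, hp_def]; ring_nf
  have hnx' : normx' = Real.sqrt ((s*t+c*u)^2 + p) := by
    simp only [normx', h1, h2, h3, hp_def]; ring_nf
  clear_value X X' normx normx'
  have hN0 : 0 ≤ normx := by rw [hnx]; positivity
  have hN2 : normx^2 = u^2 + p := by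
    rw [hnx]; exact Real.sq_sqrt (by positivity)
  have hN'0 : 0 ≤ normx' := by rw [hnx']; positivity
  have hN'2 : normx'^2 = (s*t+c*u)^2 + p := by
    rw [hnx']; exact Real.sq_sqrt (by positivity)
  have huN : |u| ≤ normx := by
    rw [hnx, ← Real.sqrt_sq_eq_abs]
    exact Real.sqrt_le_sqrt (by linarith [hp0])
  have habs : |s*u| ≤ a*normx := by
    rw [abs_mul, ← ha_def]
    exact mul_le_mul_of_nonneg_left huN ha0
  have hsuN : -(a*normx) ≤ s*u := by linarith [neg_abs_le (s*u)]
  have hsu_ub : s*u ≤ a*normx := by linarith [le_abs_self (s*u)]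
  have hr2 : Real.sqrt 2 ^2 = 2 := Real.sq_sqrt (by norm_num)
  set r2 := Real.sqrt 2 with hr2_def
  have hr20 : 0 ≤ r2 := Real.sqrt_nonneg 2
  have hr21 : 1 ≤ r2 := by
    rw [hr2_def, show (1:ℝ) = Real.sqrt 1 by simp]
    exact Real.sqrt_le_sqrt (by norm_num)
  have hr2pos : 0 < r2 := by linarith
  rw [h0]
  constructor
  · -- lower bound
    rw [show (1/r2)*(c-a)*(t+normx) = ((c-a)*(t+normx))/r2 by ring, div_le_iff₀ hr2pos]
    rcases le_or_gt ((c-a)*(t+normx) - r2*(c*t+s*u)) 0 with hq | hq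
    · linarith [mul_nonneg hr20 hN'0]
    · have hkey := key_lower c s a t u normx p r2 hc2 ha ha0 hc1 ht hN0 hN2 hr2 hr21 hsuN hq.le
      have hqle : (c-a)*(t+normx) - r2*(c*t+s*u) ≤ r2*normx' := by
        have hsq : ((c-a)*(t+normx) - r2*(c*t+s*u))^2 ≤ (r2*normx')^2 := by
          rw [mul_pow, hr2, hN'2]; linarith [hkey]
        exact le_of_sq_le_sq_aux _ _ (mul_nonneg hr20 hN'0) hsq
      linarith
  · -- upper bound
    have hub1 : c*t + s*u ≤ c*t + a*normx := by linarith
    have hub2 : normx' ≤ c*normx + a*t := by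
      have hcN : 0 ≤ c*normx + a*t := by positivity
      have hsq : (s*t+c*u)^2 + p ≤ (c*normx + a*t)^2 := by
        have hc2ge : (1:ℝ) ≤ c^2 := by nlinarith [mul_le_mul hc1 hc1 (by norm_num) (by linarith : (0:ℝ) ≤ c)]
        have hf1 : 0 ≤ (c^2-1)*p := mul_nonneg (by linarith) hp0
        have hf2 : 0 ≤ c*t*(a*normx - s*u) :=
          mul_nonneg (mul_nonneg (by linarith) ht) (by linarith)
        have hN2c : c^2*normx^2 = c^2*(u^2+p) := by rw [hN2]
        have hat2 : a^2*t^2 = s^2*t^2 := by rw [ha]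
        linarith [hf1, hf2, hN2c, hat2]
      calc normx' = Real.sqrt ((s*t+c*u)^2 + p) := hnx'
        _ ≤ Real.sqrt ((c*normx + a*t)^2) := Real.sqrt_le_sqrt hsq
        _ = c*normx + a*t := Real.sqrt_sq hcN
    linarith [hub1, hub2]
end

section
/- Every element A of the restricted Lorentz group SO₀(3,1) can be written as A = R₁ · A_φ · R₂ for some rapidity φ ∈ ℝ and spatial rotations R₁, R₂ (i.e. block-diagonal matrices diag(1, R̃ᵢ) with R̃ᵢ ∈ SO(3)). -/
open Matrix

noncomputable def η : Matrix (Unit ⊕ Fin 3) (Unit ⊕ Fin 3) ℝ :=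
  Matrix.fromBlocks (-1) 0 0 1

/-- The boost of rapidity `φ` in the first spatial coordinate, written with
index type `Unit ⊕ Fin 3`. -/
noncomputable def boostS (φ : ℝ) : Matrix (Unit ⊕ Fin 3) (Unit ⊕ Fin 3) ℝ :=
  Matrix.of fun i j =>
    match i, j with
    | .inl _, .inl _ => Real.cosh φ
    | .inl _, .inr k => if k = 0 then Real.sinh φ else 0
    | .inr k, .inl _ => if k = 0 then Real.sinh φ else 0
    | .inr k, .inr l => if k = 0 ∧ l = 0 then Real.cosh φ else if k = l then 1 else 0

lemma rot_exists (u : Fin 3 → ℝ) (hu : ∑ i, u i ^ 2 = 1) :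
    ∃ R : Matrix (Fin 3) (Fin 3) ℝ, Rᵀ * R = 1 ∧ R.det = 1 ∧ ∀ i, R i 0 = u i := by
  classical
  set v : EuclideanSpace ℝ (Fin 3) := WithLp.toLp 2 u with hv
  have hnorm : ‖v‖ = 1 := by
    rw [EuclideanSpace.norm_eq]
    have : ∑ i, v i ^ 2 = 1 := by simpa [hv] using hu
    simp only [Real.norm_eq_abs, sq_abs]
    rw [this, Real.sqrt_one]
  have hcard : Module.finrank ℝ (EuclideanSpace ℝ (Fin 3)) = Fintype.card (Fin 3) := by simp
  have horth : Orthonormal ℝ (({0} : Set (Fin 3)).restrict (fun _ => v)) := by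
    rw [orthonormal_iff_ite]
    rintro ⟨i, hi⟩ ⟨j, hj⟩
    simp only [Set.mem_singleton_iff] at hi hj
    subst hi; subst hj
    simp only [if_true]
    rw [PiLp.inner_apply]
    simp only [RCLike.inner_apply, conj_trivial]
    simp only [sq] at hu; exact hu
  obtain ⟨b, hb⟩ := horth.exists_orthonormalBasis_extension_of_card_eq hcard
  have hb0 : b 0 = v := hb 0 rfl
  set R : Matrix (Fin 3) (Fin 3) ℝ := Matrix.of fun i j => b j i with hR
  have hRo : Rᵀ * R = 1 := by
    ext j k
    have := b.orthonormal
    rw [orthonormal_iff_ite] at this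
    have h2 := this j k
    rw [PiLp.inner_apply] at h2
    simp only [RCLike.inner_apply, conj_trivial] at h2
    simp [Matrix.mul_apply, hR, Matrix.one_apply, ← h2, mul_comm]
  have hcol : ∀ i, R i 0 = u i := fun i => by simp [hR, hb0, hv]
  have hdet : R.det = 1 ∨ R.det = -1 := by
    have : R.det * R.det = 1 := by
      have := congrArg Matrix.det hRo
      rwa [Matrix.det_mul, Matrix.det_transpose, Matrix.det_one] at this
    rcases mul_self_eq_one_iff.mp this with h | h
    · exact Or.inl h
    · exact Or.inr h
  rcases hdet with h | h
  · exact ⟨R, hRo, h, hcol⟩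
  · refine ⟨R * Matrix.diagonal ![1, -1, 1], ?_, ?_, ?_⟩
    · rw [Matrix.transpose_mul, Matrix.mul_assoc, ← Matrix.mul_assoc Rᵀ R, hRo,
        Matrix.one_mul, Matrix.diagonal_transpose, Matrix.diagonal_mul_diagonal]
      ext i j
      fin_cases i <;> fin_cases j <;>
        simp [Matrix.diagonal_apply, Matrix.one_apply]
    · simp [Matrix.det_mul, h, Matrix.det_diagonal, Fin.prod_univ_three]
    · intro i
      rw [Matrix.mul_diagonal]
      simp [hcol]

lemma boost_add (a b : ℝ) : boostS a * boostS b = boostS (a + b) := by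
  ext i j
  rcases i with i | k <;> rcases j with j | l
  · simp [boostS, Matrix.mul_apply, Fintype.sum_sum_type, Fin.sum_univ_three,
      Real.cosh_add, Real.sinh_add] <;> ring
  · fin_cases l <;>
      simp [boostS, Matrix.mul_apply, Fintype.sum_sum_type, Fin.sum_univ_three,
        Real.cosh_add, Real.sinh_add] <;> ring
  · fin_cases k <;>
      simp [boostS, Matrix.mul_apply, Fintype.sum_sum_type, Fin.sum_univ_three,
        Real.cosh_add, Real.sinh_add] <;> ring
  · fin_cases k <;> fin_cases l <;>
      simp [boostS, Matrix.mul_apply, Fintype.sum_sum_type, Fin.sum_univ_three,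
        Real.cosh_add, Real.sinh_add] <;> ring

lemma boost_zero : boostS 0 = 1 := by
  ext i j
  rcases i with i | k <;> rcases j with j | l <;>
    simp [boostS, Matrix.one_apply]
  fin_cases k <;> fin_cases l <;> simp

lemma eta_sq : η * η = 1 := by
  rw [η, Matrix.fromBlocks_multiply]
  simp [Matrix.fromBlocks_one]

lemma eta_boost_eta (φ : ℝ) : η * boostS φ * η = boostS (-φ) := by
  ext i j
  rcases i with i | k <;> rcases j with j | l
  · simp [boostS, η, Matrix.mul_apply, Fintype.sum_sum_type, Fin.sum_univ_three,
      Matrix.fromBlocks, Matrix.one_apply]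
  · fin_cases l <;>
      simp [boostS, η, Matrix.mul_apply, Fintype.sum_sum_type, Fin.sum_univ_three,
        Matrix.fromBlocks, Matrix.one_apply]
  · fin_cases k <;>
      simp [boostS, η, Matrix.mul_apply, Fintype.sum_sum_type, Fin.sum_univ_three,
        Matrix.fromBlocks, Matrix.one_apply]
  · fin_cases k <;> fin_cases l <;>
      simp [boostS, η, Matrix.mul_apply, Fintype.sum_sum_type, Fin.sum_univ_three,
        Matrix.fromBlocks, Matrix.one_apply]

lemma boost_transpose (φ : ℝ) : (boostS φ)ᵀ = boostS φ := by
  ext i j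
  rcases i with i | k <;> rcases j with j | l
  · rfl
  · rfl
  · rfl
  · fin_cases k <;> fin_cases l <;> rfl

lemma det_eta : η.det = -1 := by
  rw [η, Matrix.det_fromBlocks_zero₂₁]
  simp [Matrix.det_unique]

lemma det_boost (φ : ℝ) : (boostS φ).det = 1 := by
  have h1 : (boostS φ).det = (boostS (φ/2)).det ^ 2 := by
    conv_lhs => rw [show φ = φ/2 + φ/2 by ring, ← boost_add]
    rw [Matrix.det_mul, sq]
  have h2 : (boostS φ).det * (boostS (-φ)).det = 1 := by
    rw [← Matrix.det_mul, boost_add, add_neg_cancel, boost_zero, Matrix.det_one]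
  have h3 : (boostS (-φ)).det = (boostS φ).det := by
    rw [← eta_boost_eta, Matrix.det_mul, Matrix.det_mul, det_eta]; ring
  rw [h3] at h2
  nlinarith [h1, h2, sq_nonneg ((boostS (φ/2)).det)]

lemma boost_lorentz (φ : ℝ) : (boostS φ)ᵀ * η * boostS φ = η := by
  rw [boost_transpose]
  have h : η * boostS φ = boostS (-φ) * η := by
    calc η * boostS φ = (η * boostS φ * η) * η := by
          rw [Matrix.mul_assoc, eta_sq, Matrix.mul_one]
      _ = boostS (-φ) * η := by rw [eta_boost_eta]
  calc boostS φ * η * boostS φ = boostS φ * (η * boostS φ) := by rw [Matrix.mul_assoc]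
    _ = boostS φ * (boostS (-φ) * η) := by rw [h]
    _ = (boostS φ * boostS (-φ)) * η := by rw [Matrix.mul_assoc]
    _ = η := by rw [boost_add, add_neg_cancel, boost_zero, Matrix.one_mul]

lemma lorentz_entry (M : Matrix (Unit ⊕ Fin 3) (Unit ⊕ Fin 3) ℝ)
    (h : Mᵀ * η * M = η) (i j : Unit ⊕ Fin 3) :
    -(M (Sum.inl ()) i * M (Sum.inl ()) j)
      + ∑ k, M (Sum.inr k) i * M (Sum.inr k) j = η i j := by
  have := congrFun (congrFun h i) j
  simp only [Matrix.mul_apply, Matrix.transpose_apply, Fintype.sum_sum_type,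
    Finset.univ_unique, Finset.sum_singleton] at this
  rw [← this]
  simp [η, Matrix.fromBlocks, Matrix.one_apply, Finset.mul_sum, Finset.sum_congr]

lemma lorentz_mul (P Q : Matrix (Unit ⊕ Fin 3) (Unit ⊕ Fin 3) ℝ)
    (hP : Pᵀ * η * P = η) (hQ : Qᵀ * η * Q = η) :
    (P * Q)ᵀ * η * (P * Q) = η := by
  rw [Matrix.transpose_mul]
  calc Qᵀ * Pᵀ * η * (P * Q) = Qᵀ * (Pᵀ * η * P) * Q := by
        simp only [Matrix.mul_assoc]
    _ = Qᵀ * η * Q := by rw [hP]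
    _ = η := hQ

/-- Every restricted Lorentz transformation (characterized as preserving `η`, having
determinant one and being orthochronous) decomposes as `R₁ * A_φ * R₂` with `R₁, R₂`
spatial rotations. -/
theorem lorentz_decomposition (A : Matrix (Unit ⊕ Fin 3) (Unit ⊕ Fin 3) ℝ)
    (hA : Aᵀ * η * A = η) (hdet : A.det = 1) (horth : 0 < A (Sum.inl ()) (Sum.inl ())) :
    ∃ (φ : ℝ) (R₁ R₂ : Matrix (Fin 3) (Fin 3) ℝ),
      R₁ᵀ * R₁ = 1 ∧ R₁.det = 1 ∧ R₂ᵀ * R₂ = 1 ∧ R₂.det = 1 ∧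
      A = Matrix.fromBlocks 1 0 0 R₁ * boostS φ * Matrix.fromBlocks 1 0 0 R₂ := by
  classical
  have key := lorentz_entry A hA
  set a : ℝ := A (Sum.inl ()) (Sum.inl ()) with ha
  set c : Fin 3 → ℝ := fun i => A (Sum.inr i) (Sum.inl ()) with hc
  have h_tt : -(a * a) + ∑ k, c k * c k = -1 := by
    have := key (Sum.inl ()) (Sum.inl ())
    simpa [η, Matrix.fromBlocks] using this
  by_cases hzero : ∑ k, c k * c k = 0
  · -- degenerate case: no boost needed
    have hck : ∀ k, c k = 0 := by
      intro k
      have hnn : ∀ i ∈ Finset.univ, (0:ℝ) ≤ c i * c i := fun i _ => mul_self_nonneg _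
      have := (Finset.sum_eq_zero_iff_of_nonneg hnn).mp hzero k (Finset.mem_univ k)
      exact mul_self_eq_zero.mp this
    have ha1 : a = 1 := by
      have haa : a * a = 1 := by rw [hzero] at h_tt; linarith
      nlinarith [horth]
    have hrow : ∀ j : Fin 3, A (Sum.inl ()) (Sum.inr j) = 0 := by
      intro j
      have hkey := key (Sum.inl ()) (Sum.inr j)
      have heta : η (Sum.inl ()) (Sum.inr j) = 0 := by simp [η, Matrix.fromBlocks]
      rw [heta] at hkey
      have hsum : ∑ k, A (Sum.inr k) (Sum.inl ()) * A (Sum.inr k) (Sum.inr j) = 0 := by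
        apply Finset.sum_eq_zero
        intro k _
        rw [show A (Sum.inr k) (Sum.inl ()) = 0 from hck k, zero_mul]
      rw [hsum] at hkey
      have : a * A (Sum.inl ()) (Sum.inr j) = 0 := by linarith
      rw [ha1, one_mul] at this
      exact this
    set M : Matrix (Fin 3) (Fin 3) ℝ := Matrix.of fun i j => A (Sum.inr i) (Sum.inr j) with hM
    have hblock : A = Matrix.fromBlocks 1 0 0 M := by
      ext i j
      rcases i with i | k <;> rcases j with j | l
      · simpa [Matrix.fromBlocks, Matrix.one_apply] using ha1.symm ▸ (ha.symm)
      · simpa [Matrix.fromBlocks] using hrow l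
      · have := hck k
        rw [hc] at this
        simpa [Matrix.fromBlocks] using this
      · simp [Matrix.fromBlocks, hM]
    have hMo : Mᵀ * M = 1 := by
      ext i j
      have hkey := key (Sum.inr i) (Sum.inr j)
      have heta : η (Sum.inr i) (Sum.inr j) = (1 : Matrix (Fin 3) (Fin 3) ℝ) i j := by
        simp [η, Matrix.fromBlocks, Matrix.one_apply]
      rw [heta, hrow i, hrow j] at hkey
      simp only [zero_mul, neg_zero, zero_add] at hkey
      simpa [Matrix.mul_apply, hM] using hkey
    have hMdet : M.det = 1 := by
      have := hdet
      rw [hblock, Matrix.det_fromBlocks_zero₂₁] at this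
      simpa using this
    refine ⟨0, M, 1, hMo, hMdet, by simp, by simp, ?_⟩
    rw [boost_zero, Matrix.mul_one, Matrix.fromBlocks_one, Matrix.mul_one]
    exact hblock
  · -- main case
    set s2 : ℝ := ∑ k, c k * c k with hs2
    have hs2pos : 0 < s2 := by
      rcases (Finset.sum_nonneg (fun i _ => mul_self_nonneg (c i))).lt_or_eq with h | h
      · exact h
      · exact absurd h.symm hzero
    set s : ℝ := Real.sqrt s2 with hs
    have hspos : 0 < s := Real.sqrt_pos.mpr hs2pos
    have hss : s * s = s2 := Real.mul_self_sqrt hs2pos.le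
    have haa : a * a = 1 + s2 := by linarith
    have hapos : 0 < a := horth
    set φ : ℝ := Real.arsinh s with hφ
    have hsinh : Real.sinh φ = s := Real.sinh_arsinh s
    have hcosh : Real.cosh φ = a := by
      rw [hφ, Real.cosh_arsinh]
      have : 1 + s ^ 2 = a ^ 2 := by rw [sq, sq]; linarith
      rw [this, Real.sqrt_sq hapos.le]
    -- rotation sending e₀ to c / s
    have hu : ∑ i, (c i / s) ^ 2 = 1 := by
      have h1 : ∀ i, (c i / s) ^ 2 = (c i * c i) / s2 := by
        intro i
        rw [div_pow, sq, sq, hss]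
      rw [Finset.sum_congr rfl (fun i _ => h1 i), ← Finset.sum_div, ← hs2,
        div_self hs2pos.ne']
    obtain ⟨R₁, hR1o, hR1det, hR1col⟩ := rot_exists (fun i => c i / s) hu
    have hstar : ∀ k, ∑ i, R₁ i k * c i = if k = 0 then s else 0 := by
      intro k
      have h := congrFun (congrFun hR1o k) 0
      simp only [Matrix.mul_apply, Matrix.transpose_apply, Matrix.one_apply] at h
      rw [Finset.sum_congr rfl (fun i _ => by rw [hR1col i])] at h
      calc ∑ i, R₁ i k * c i = s * ∑ i, R₁ i k * (c i / s) := by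
            rw [Finset.mul_sum]
            apply Finset.sum_congr rfl
            intro i _
            field_simp
          _ = s * (if k = 0 then 1 else 0) := by rw [h]
          _ = if k = 0 then s else 0 := by split <;> simp
    set B1 : Matrix (Unit ⊕ Fin 3) (Unit ⊕ Fin 3) ℝ := Matrix.fromBlocks 1 0 0 R₁ᵀ with hB1
    set D : Matrix (Unit ⊕ Fin 3) (Unit ⊕ Fin 3) ℝ := B1 * A with hD
    have hD_t : D (Sum.inl ()) (Sum.inl ()) = a := by
      simp [hD, hB1, Matrix.mul_apply, Fintype.sum_sum_type, Matrix.fromBlocks,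
        Matrix.one_apply, ha]
    have hD_k : ∀ k, D (Sum.inr k) (Sum.inl ()) = if k = 0 then s else 0 := by
      intro k
      have : D (Sum.inr k) (Sum.inl ()) = ∑ i, R₁ i k * c i := by
        simp [hD, hB1, Matrix.mul_apply, Fintype.sum_sum_type, Matrix.fromBlocks, hc,
          Matrix.transpose_apply]
      rw [this, hstar k]
    set C : Matrix (Unit ⊕ Fin 3) (Unit ⊕ Fin 3) ℝ := boostS (-φ) * D with hCdef
    have hC_t : C (Sum.inl ()) (Sum.inl ()) = 1 := by
      have : C (Sum.inl ()) (Sum.inl ()) =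
          Real.cosh (-φ) * D (Sum.inl ()) (Sum.inl ())
            + ∑ k, (if k = 0 then Real.sinh (-φ) else 0) * D (Sum.inr k) (Sum.inl ()) := by
        simp [hCdef, Matrix.mul_apply, Fintype.sum_sum_type, boostS]
      rw [this, hD_t, Fin.sum_univ_three]
      simp [hD_k, Real.cosh_neg, Real.sinh_neg, hsinh, hcosh]
      nlinarith [hss, haa]
    have hC_k : ∀ k, C (Sum.inr k) (Sum.inl ()) = 0 := by
      intro k
      have hexp : C (Sum.inr k) (Sum.inl ()) =
          (if k = 0 then Real.sinh (-φ) else 0) * D (Sum.inl ()) (Sum.inl ())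
            + ∑ l, (if k = 0 ∧ l = 0 then Real.cosh (-φ) else if k = l then 1 else 0)
                * D (Sum.inr l) (Sum.inl ()) := by
        simp [hCdef, Matrix.mul_apply, Fintype.sum_sum_type, boostS]
      rw [hexp, hD_t, Fin.sum_univ_three]
      fin_cases k <;>
        simp [hD_k, Real.cosh_neg, Real.sinh_neg, hsinh, hcosh] <;> ring
    have hB1L : B1ᵀ * η * B1 = η := by
      rw [hB1, η, Matrix.fromBlocks_transpose, Matrix.fromBlocks_multiply,
        Matrix.fromBlocks_multiply]
      have : R₁ * R₁ᵀ = 1 := mul_eq_one_comm.mp hR1o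
      simp [Matrix.transpose_one, this]
    have hCL : Cᵀ * η * C = η := by
      rw [hCdef, hD]
      exact lorentz_mul _ _ (boost_lorentz (-φ)) (lorentz_mul _ _ hB1L hA)
    have key' := lorentz_entry C hCL
    have hC_row : ∀ l, C (Sum.inl ()) (Sum.inr l) = 0 := by
      intro l
      have hkey := key' (Sum.inl ()) (Sum.inr l)
      have heta : η (Sum.inl ()) (Sum.inr l) = 0 := by simp [η, Matrix.fromBlocks]
      rw [heta, hC_t] at hkey
      have hsum : ∑ k, C (Sum.inr k) (Sum.inl ()) * C (Sum.inr k) (Sum.inr l) = 0 := by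
        apply Finset.sum_eq_zero
        intro k _
        rw [hC_k k, zero_mul]
      rw [hsum] at hkey
      linarith
    set R₂ : Matrix (Fin 3) (Fin 3) ℝ := Matrix.of fun k l => C (Sum.inr k) (Sum.inr l)
      with hR2
    have hR2o : R₂ᵀ * R₂ = 1 := by
      ext i j
      have hkey := key' (Sum.inr i) (Sum.inr j)
      have heta : η (Sum.inr i) (Sum.inr j) = (1 : Matrix (Fin 3) (Fin 3) ℝ) i j := by
        simp [η, Matrix.fromBlocks, Matrix.one_apply]
      rw [heta, hC_row i, hC_row j] at hkey
      simp only [zero_mul, neg_zero, zero_add] at hkey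
      simpa [Matrix.mul_apply, hR2] using hkey
    have hCblock : C = Matrix.fromBlocks 1 0 0 R₂ := by
      ext i j
      rcases i with i | k <;> rcases j with j | l
      · simpa [Matrix.fromBlocks, Matrix.one_apply] using hC_t
      · simpa [Matrix.fromBlocks] using hC_row l
      · simpa [Matrix.fromBlocks] using hC_k k
      · simp [Matrix.fromBlocks, hR2]
    have hR2det : R₂.det = 1 := by
      have hcd : C.det = 1 := by
        rw [hCdef, hD, Matrix.det_mul, Matrix.det_mul, det_boost, hB1,
          Matrix.det_fromBlocks_zero₂₁, Matrix.det_transpose, hR1det, hdet]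
        simp
      rw [hCblock, Matrix.det_fromBlocks_zero₂₁] at hcd
      simpa using hcd
    refine ⟨φ, R₁, R₂, hR1o, hR1det, hR2o, hR2det, ?_⟩
    have hrec : A = Matrix.fromBlocks 1 0 0 R₁ * boostS φ * C := by
      rw [hCdef, hD, hB1]
      calc A = 1 * A := (Matrix.one_mul A).symm
        _ = (Matrix.fromBlocks 1 0 0 R₁ * Matrix.fromBlocks 1 0 0 R₁ᵀ) * A := by
            rw [Matrix.fromBlocks_multiply]
            have : R₁ * R₁ᵀ = 1 := mul_eq_one_comm.mp hR1o
            simp [this, Matrix.fromBlocks_one]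
        _ = (Matrix.fromBlocks 1 0 0 R₁ * (boostS φ * boostS (-φ)) *
              Matrix.fromBlocks 1 0 0 R₁ᵀ) * A := by
            rw [boost_add, add_neg_cancel, boost_zero, Matrix.mul_one]
        _ = Matrix.fromBlocks 1 0 0 R₁ * boostS φ *
              (boostS (-φ) * (Matrix.fromBlocks 1 0 0 R₁ᵀ * A)) := by
            simp only [Matrix.mul_assoc]
    rw [hrec, hCblock]
end

section
/- Fix m > 0 and φ ∈ ℝ. The map G^φ : ℝ³ × ℝ³ → ℝ³ × ℝ³ sending (x,v) to (y,w), where w := Aˢ_φ(√(m²+|v|²), v), w⁰ := √(m²+|w|²), and y := (x¹(cosh φ - (sinh φ/w⁰) w¹), x² - (sinh φ/w⁰) x¹ w², x³ - (sinh φ/w⁰) x¹ w³), is a C¹ diffeomorphism whose Jacobian determinant is identically 1. -/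
open Real ContinuousLinearMap

namespace GphiAux
noncomputable section

abbrev E3 : Type := Fin 3 → ℝ

def rr (m : ℝ) (v : E3) : ℝ := Real.sqrt (m ^ 2 + ∑ k : Fin 3, (v k) ^ 2)

variable {m : ℝ}

lemma sum3 (v : E3) : ∑ k : Fin 3, (v k) ^ 2 = v 0 ^ 2 + v 1 ^ 2 + v 2 ^ 2 :=
  Fin.sum_univ_three _

lemma q_pos (hm : 0 < m) (v : E3) : 0 < m ^ 2 + ∑ k : Fin 3, (v k) ^ 2 := by
  have : (0:ℝ) ≤ ∑ k : Fin 3, (v k)^2 := Finset.sum_nonneg fun k _ => sq_nonneg _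
  nlinarith

lemma rr_pos (hm : 0 < m) (v : E3) : 0 < rr m v := Real.sqrt_pos.2 (q_pos hm v)

def PX (i : Fin 3) : E3 × E3 →L[ℝ] ℝ := (proj i).comp (fst ℝ E3 E3)
def PV (i : Fin 3) : E3 × E3 →L[ℝ] ℝ := (proj i).comp (snd ℝ E3 E3)
def DR (m : ℝ) (v : E3) : E3 × E3 →L[ℝ] ℝ :=
  (rr m v)⁻¹ • (v 0 • PV 0 + v 1 • PV 1 + v 2 • PV 2)

lemma hasFDerivAt_rr (hm : 0 < m) (v : E3) :
    HasFDerivAt (rr m)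
      ((rr m v)⁻¹ • (v 0 • proj 0 + v 1 • proj 1 + v 2 • proj 2 : E3 →L[ℝ] ℝ)) v := by
  have ha := (rr_pos hm v).ne'
  have hfun : (fun u : E3 => m ^ 2 + ∑ k : Fin 3, (u k) ^ 2)
      = fun u : E3 => m ^ 2 + (u 0 * u 0 + (u 1 * u 1 + u 2 * u 2)) := by
    funext u; rw [sum3]; ring
  have h0 : HasFDerivAt (fun u : E3 => u 0) (proj 0 : E3 →L[ℝ] ℝ) v := hasFDerivAt_apply 0 v
  have h1 : HasFDerivAt (fun u : E3 => u 1) (proj 1 : E3 →L[ℝ] ℝ) v := hasFDerivAt_apply 1 v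
  have h2 : HasFDerivAt (fun u : E3 => u 2) (proj 2 : E3 →L[ℝ] ℝ) v := hasFDerivAt_apply 2 v
  have hq := ((h0.mul h0).add ((h1.mul h1).add (h2.mul h2))).const_add (m ^ 2)
  replace hq : HasFDerivAt (fun u : E3 => m ^ 2 + ∑ k : Fin 3, (u k) ^ 2)
      ((v 0 • proj 0 + v 0 • proj 0 + (v 1 • proj 1 + v 1 • proj 1 + (v 2 • proj 2 + v 2 • proj 2)) : E3 →L[ℝ] ℝ)) v := by
    rw [hfun]; exact hq
  have hs := (Real.hasDerivAt_sqrt (q_pos hm v).ne').comp_hasFDerivAt v hq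
  refine hs.congr_fderiv ?_
  have hrv : Real.sqrt (m ^ 2 + ∑ k : Fin 3, (v k) ^ 2) = rr m v := rfl
  refine ContinuousLinearMap.ext fun u => ?_
  simp [hrv]
  field_simp
  ring


variable {m : ℝ}

def FF (m φ : ℝ) (p : E3 × E3) : E3 × E3 :=
  (![p.1 0 * rr m p.2 * (rr m p.2 * Real.cosh φ + p.2 0 * Real.sinh φ)⁻¹,
     p.1 1 - Real.sinh φ * p.1 0 * p.2 1 * (rr m p.2 * Real.cosh φ + p.2 0 * Real.sinh φ)⁻¹,
     p.1 2 - Real.sinh φ * p.1 0 * p.2 2 * (rr m p.2 * Real.cosh φ + p.2 0 * Real.sinh φ)⁻¹],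
   ![rr m p.2 * Real.sinh φ + p.2 0 * Real.cosh φ, p.2 1, p.2 2])

lemma b_pos (hm : 0 < m) (φ : ℝ) (v : E3) :
    0 < rr m v * Real.cosh φ + v 0 * Real.sinh φ := by
  have h1 : rr m v ^ 2 = m ^ 2 + (v 0 ^ 2 + v 1 ^ 2 + v 2 ^ 2) := by
    rw [rr, Real.sq_sqrt (q_pos hm v).le, sum3]
  have h2 := rr_pos hm v
  have h3 : Real.cosh φ ^ 2 = Real.sinh φ ^ 2 + 1 := Real.cosh_sq φ
  have h4 : 0 < Real.cosh φ := Real.cosh_pos φ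
  have h5 : v 0 ^ 2 * Real.sinh φ ^ 2 < rr m v ^ 2 * Real.cosh φ ^ 2 := by
    nlinarith [sq_nonneg (v 1), sq_nonneg (v 2), sq_nonneg (v 0 * Real.sinh φ)]
  rcases le_or_gt 0 (v 0 * Real.sinh φ) with h | h
  · nlinarith [mul_pos h2 h4]
  · nlinarith [mul_pos h2 h4]

def DB (m φ : ℝ) (v : E3) : E3 × E3 →L[ℝ] ℝ :=
  Real.cosh φ • DR m v + Real.sinh φ • PV 0

def LL (m φ : ℝ) (x v : E3) : (E3 × E3) →L[ℝ] (E3 × E3) :=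
  (ContinuousLinearMap.pi
    ![(rr m v * (rr m v * Real.cosh φ + v 0 * Real.sinh φ)⁻¹) • PX 0
        + (x 0 * (rr m v * Real.cosh φ + v 0 * Real.sinh φ)⁻¹) • DR m v
        + (-(x 0 * rr m v * ((rr m v * Real.cosh φ + v 0 * Real.sinh φ) ^ 2)⁻¹)) • DB m φ v,
      PX 1 + (-(Real.sinh φ * v 1 * (rr m v * Real.cosh φ + v 0 * Real.sinh φ)⁻¹)) • PX 0
        + (-(Real.sinh φ * x 0 * (rr m v * Real.cosh φ + v 0 * Real.sinh φ)⁻¹)) • PV 1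
        + (Real.sinh φ * x 0 * v 1 * ((rr m v * Real.cosh φ + v 0 * Real.sinh φ) ^ 2)⁻¹) • DB m φ v,
      PX 2 + (-(Real.sinh φ * v 2 * (rr m v * Real.cosh φ + v 0 * Real.sinh φ)⁻¹)) • PX 0
        + (-(Real.sinh φ * x 0 * (rr m v * Real.cosh φ + v 0 * Real.sinh φ)⁻¹)) • PV 2
        + (Real.sinh φ * x 0 * v 2 * ((rr m v * Real.cosh φ + v 0 * Real.sinh φ) ^ 2)⁻¹) • DB m φ v]).prod
  (ContinuousLinearMap.pi
    ![Real.sinh φ • DR m v + Real.cosh φ • PV 0, PV 1, PV 2])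

set_option maxHeartbeats 2000000 in
lemma hasFDerivAt_FF (hm : 0 < m) (φ : ℝ) (x v : E3) :
    HasFDerivAt (FF m φ) (LL m φ x v) (x, v) := by
  have ha := (rr_pos hm v).ne'
  have hb := (b_pos hm φ v).ne'
  have hX : ∀ i, HasFDerivAt (fun p : E3 × E3 => p.1 i) (PX i) (x, v) := fun i =>
    by have := (hasFDerivAt_apply i x).comp (x, v) (hasFDerivAt_fst (𝕜 := ℝ) (E := E3) (F := E3) (p := (x, v))); exact this
  have hV : ∀ i, HasFDerivAt (fun p : E3 × E3 => p.2 i) (PV i) (x, v) := fun i =>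
    by have := (hasFDerivAt_apply i v).comp (x, v) (hasFDerivAt_snd (𝕜 := ℝ) (E := E3) (F := E3) (p := (x, v))); exact this
  have hRv : HasFDerivAt (fun p : E3 × E3 => rr m p.2) (DR m v) (x, v) := by
    refine ((hasFDerivAt_rr hm v).comp (x, v) (hasFDerivAt_snd (𝕜 := ℝ) (E := E3) (F := E3) (p := (x, v)))).congr_fderiv ?_
    refine ContinuousLinearMap.ext fun u => ?_
    simp [DR, PV]
  have hB : HasFDerivAt (fun p : E3 × E3 => rr m p.2 * Real.cosh φ + p.2 0 * Real.sinh φ)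
      (DB m φ v) (x, v) := by
    refine ((hRv.mul_const (Real.cosh φ)).add ((hV 0).mul_const (Real.sinh φ))).congr_fderiv ?_
    refine ContinuousLinearMap.ext fun u => ?_
    simp [DB, DR, PV]
    try ring
  have hBinv := HasDerivAt.comp_hasFDerivAt (x, v) (hasDerivAt_inv hb) hB
  unfold FF LL
  refine HasFDerivAt.prodMk (hasFDerivAt_pi'.2 ?_) (hasFDerivAt_pi'.2 ?_) <;> intro i <;>
    fin_cases i <;>
    simp only [ContinuousLinearMap.proj_pi, Matrix.cons_val_zero, Matrix.cons_val_one,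
      Matrix.head_cons, Matrix.cons_val_two, Matrix.tail_cons, Fin.isValue, Fin.reduceFinMk, Fin.zero_eta, Fin.mk_one]
  · refine (((hX 0).mul hRv).mul hBinv).congr_fderiv ?_
    refine ContinuousLinearMap.ext fun u => ?_
    simp only [ContinuousLinearMap.add_apply, ContinuousLinearMap.smul_apply,
      ContinuousLinearMap.coe_comp', ContinuousLinearMap.coe_fst', ContinuousLinearMap.coe_snd',
      ContinuousLinearMap.proj_apply, Function.comp_apply, smul_eq_mul, Pi.mul_apply,
      ContinuousLinearMap.sub_apply, DR, DB, PX, PV]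
    field_simp
    ring
  · refine ((hX 1).sub (((((hX 0).const_mul (Real.sinh φ))).mul (hV 1)).mul hBinv)).congr_fderiv ?_
    refine ContinuousLinearMap.ext fun u => ?_
    simp only [ContinuousLinearMap.add_apply, ContinuousLinearMap.smul_apply,
      ContinuousLinearMap.coe_comp', ContinuousLinearMap.coe_fst', ContinuousLinearMap.coe_snd',
      ContinuousLinearMap.proj_apply, Function.comp_apply, smul_eq_mul, Pi.mul_apply,
      ContinuousLinearMap.sub_apply, DR, DB, PX, PV]
    have hb' : rr m v * cosh φ + sinh φ * v 0 ≠ 0 := by rwa [mul_comm (sinh φ)]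
    field_simp
    ring
  · refine ((hX 2).sub (((((hX 0).const_mul (Real.sinh φ))).mul (hV 2)).mul hBinv)).congr_fderiv ?_
    refine ContinuousLinearMap.ext fun u => ?_
    simp only [ContinuousLinearMap.add_apply, ContinuousLinearMap.smul_apply,
      ContinuousLinearMap.coe_comp', ContinuousLinearMap.coe_fst', ContinuousLinearMap.coe_snd',
      ContinuousLinearMap.proj_apply, Function.comp_apply, smul_eq_mul, Pi.mul_apply,
      ContinuousLinearMap.sub_apply, DR, DB, PX, PV]
    have hb' : rr m v * cosh φ + sinh φ * v 0 ≠ 0 := by rwa [mul_comm (sinh φ)]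
    field_simp
    ring
  · refine ((hRv.mul_const (Real.sinh φ)).add ((hV 0).mul_const (Real.cosh φ))).congr_fderiv ?_
    refine ContinuousLinearMap.ext fun u => ?_
    simp [DR, DB, PX, PV]
    try ring
  · exact hV 1
  · exact hV 2

lemma rr_sq (hm : 0 < m) (v : E3) :
    rr m v ^ 2 = m ^ 2 + (v 0 ^ 2 + v 1 ^ 2 + v 2 ^ 2) := by
  rw [rr, Real.sq_sqrt (q_pos hm v).le, sum3]

lemma rr_boost (hm : 0 < m) (φ : ℝ) (v : E3) :
    rr m ![rr m v * Real.sinh φ + v 0 * Real.cosh φ, v 1, v 2]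
      = rr m v * Real.cosh φ + v 0 * Real.sinh φ := by
  have h1 := rr_sq hm v
  have h3 : Real.cosh φ ^ 2 = Real.sinh φ ^ 2 + 1 := Real.cosh_sq φ
  rw [rr, sum3]
  have key : m ^ 2 + ((![rr m v * Real.sinh φ + v 0 * Real.cosh φ, v 1, v 2] : E3) 0 ^ 2
      + (![rr m v * Real.sinh φ + v 0 * Real.cosh φ, v 1, v 2] : E3) 1 ^ 2
      + (![rr m v * Real.sinh φ + v 0 * Real.cosh φ, v 1, v 2] : E3) 2 ^ 2)
      = (rr m v * Real.cosh φ + v 0 * Real.sinh φ) ^ 2 := by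
    simp only [Matrix.cons_val_zero, Matrix.cons_val_one, Matrix.head_cons,
      Matrix.cons_val_two, Matrix.tail_cons]
    nlinarith
  rw [key, Real.sqrt_sq (b_pos hm φ v).le]

lemma contDiff_rr (hm : 0 < m) : ContDiff ℝ 1 (rr m) := by
  have h : ContDiff ℝ 1 fun v : E3 => m ^ 2 + ∑ k : Fin 3, (v k) ^ 2 := by
    apply ContDiff.add contDiff_const
    apply ContDiff.sum
    intro k _
    exact (contDiff_apply ℝ ℝ k).pow 2
  exact h.sqrt fun v => (q_pos hm v).ne'

lemma contDiff_FF (hm : 0 < m) (φ : ℝ) : ContDiff ℝ 1 (FF m φ) := by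
  have hx : ∀ i : Fin 3, ContDiff ℝ 1 fun p : E3 × E3 => p.1 i := fun i =>
    (contDiff_apply ℝ ℝ i).comp contDiff_fst
  have hv : ∀ i : Fin 3, ContDiff ℝ 1 fun p : E3 × E3 => p.2 i := fun i =>
    (contDiff_apply ℝ ℝ i).comp contDiff_snd
  have hr : ContDiff ℝ 1 fun p : E3 × E3 => rr m p.2 := (contDiff_rr hm).comp contDiff_snd
  have hbinv : ContDiff ℝ 1 fun p : E3 × E3 =>
      (rr m p.2 * Real.cosh φ + p.2 0 * Real.sinh φ)⁻¹ := by
    refine ContDiff.inv ?_ fun p => (b_pos hm φ p.2).ne'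
    exact (hr.mul contDiff_const).add ((hv 0).mul contDiff_const)
  refine ContDiff.prodMk ?_ ?_ <;> rw [contDiff_pi] <;> intro i <;> fin_cases i <;>
    simp only [Matrix.cons_val_zero, Matrix.cons_val_one, Matrix.head_cons,
      Matrix.cons_val_two, Matrix.tail_cons]
  · exact ((hx 0).mul hr).mul hbinv
  · exact (hx 1).sub (((contDiff_const.mul (hx 0)).mul (hv 1)).mul hbinv)
  · exact (hx 2).sub (((contDiff_const.mul (hx 0)).mul (hv 2)).mul hbinv)
  · exact (hr.mul contDiff_const).add ((hv 0).mul contDiff_const)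
  · exact hv 1
  · exact hv 2

lemma FF_comp (hm : 0 < m) (φ : ℝ) (p : E3 × E3) : FF m (-φ) (FF m φ p) = p := by
  obtain ⟨x, v⟩ := p
  have ha := (rr_pos hm v).ne'
  have hb := (b_pos hm φ v).ne'
  have hc : Real.cosh φ ^ 2 - Real.sinh φ ^ 2 = 1 := Real.cosh_sq_sub_sinh_sq φ
  have e1 : rr m ![rr m v * Real.sinh φ + v 0 * Real.cosh φ, v 1, v 2]
      = rr m v * Real.cosh φ + v 0 * Real.sinh φ := rr_boost hm φ v
  refine Prod.ext ?_ ?_ <;> funext i <;> fin_cases i <;>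
    simp only [FF, Matrix.cons_val_zero, Matrix.cons_val_one, Matrix.head_cons,
      Matrix.cons_val_two, Matrix.tail_cons, Real.cosh_neg, Real.sinh_neg, e1]
  all_goals
    have e2 : (rr m v * Real.cosh φ + v 0 * Real.sinh φ) * Real.cosh φ +
        (rr m v * Real.sinh φ + v 0 * Real.cosh φ) * -Real.sinh φ = rr m v := by
      linear_combination (rr m v) * hc
    try rw [e2]
  all_goals simp
  all_goals try field_simp
  all_goals try ring
  all_goals linear_combination (v 0) * hc

set_option maxHeartbeats 2000000 in
lemma det_LL (hm : 0 < m) (φ : ℝ) (x v : E3) :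
    LinearMap.det ((LL m φ x v) : (E3 × E3) →ₗ[ℝ] (E3 × E3)) = 1 := by
  have ha := (rr_pos hm v).ne'
  have hb := (b_pos hm φ v).ne'
  set bb := (Pi.basisFun ℝ (Fin 3)).prod (Pi.basisFun ℝ (Fin 3)) with hbb
  rw [← LinearMap.det_toMatrix bb]
  set M := LinearMap.toMatrix bb bb ((LL m φ x v) : (E3 × E3) →ₗ[ℝ] (E3 × E3)) with hM
  have h21 : M.toBlocks₂₁ = 0 := by
    ext i j
    fin_cases i <;> fin_cases j <;>
      simp [hM, hbb, Matrix.toBlocks₂₁, LinearMap.toMatrix_apply, LL, PX, PV, DR, DB,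
        Module.Basis.prod_apply, Pi.basisFun_apply, Module.Basis.prod_repr_inl, Module.Basis.prod_repr_inr,
        Pi.basisFun_repr]
  rw [← Matrix.fromBlocks_toBlocks M, h21, Matrix.det_fromBlocks_zero₂₁,
    Matrix.det_fin_three, Matrix.det_fin_three]
  simp [hM, hbb, Matrix.toBlocks₁₁, Matrix.toBlocks₂₂, LinearMap.toMatrix_apply, LL, PX, PV,
    DR, DB, Module.Basis.prod_apply, Pi.basisFun_apply, Module.Basis.prod_repr_inl, Module.Basis.prod_repr_inr,
    Pi.basisFun_repr]
  field_simp
  ring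


end
end GphiAux

open GphiAux in
/-- The phase-space change of variables associated to the Lorentz boost `A_φ` on the
mass-`m` shell is a `C¹` diffeomorphism with Jacobian determinant identically `1`. -/
theorem Gphi_diffeomorphism_jacobian_one (m : ℝ) (hm : 0 < m) (φ : ℝ) :
    let wmap : (Fin 3 → ℝ) → (Fin 3 → ℝ) := fun v =>
      ![Real.sqrt (m ^ 2 + ∑ k : Fin 3, (v k) ^ 2) * Real.sinh φ + v 0 * Real.cosh φ,
        v 1, v 2]
    let G : (Fin 3 → ℝ) × (Fin 3 → ℝ) → (Fin 3 → ℝ) × (Fin 3 → ℝ) := fun p =>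
      let w := wmap p.2
      let w0 := Real.sqrt (m ^ 2 + ∑ k : Fin 3, (w k) ^ 2)
      (![p.1 0 * (Real.cosh φ - (Real.sinh φ / w0) * w 0),
         p.1 1 - (Real.sinh φ / w0) * p.1 0 * w 1,
         p.1 2 - (Real.sinh φ / w0) * p.1 0 * w 2], w)
    ∃ Ginv : (Fin 3 → ℝ) × (Fin 3 → ℝ) → (Fin 3 → ℝ) × (Fin 3 → ℝ),
      ContDiff ℝ 1 G ∧ ContDiff ℝ 1 Ginv ∧
      Function.LeftInverse Ginv G ∧ Function.RightInverse Ginv G ∧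
      ∀ p, LinearMap.det (fderiv ℝ G p).toLinearMap = 1 := by
  intro wmap G
  have hGF : G = FF m φ := by
    funext p
    obtain ⟨x, v⟩ := p
    have hb := (b_pos hm φ v).ne'
    have hc := Real.cosh_sq_sub_sinh_sq φ
    have e0 : Real.sqrt (m ^ 2 + ∑ k : Fin 3, (v k) ^ 2) = rr m v := rfl
    have e1 : Real.sqrt (m ^ 2 + ∑ k : Fin 3, (wmap v k) ^ 2)
        = rr m v * Real.cosh φ + v 0 * Real.sinh φ := by
      simp only [wmap]
      exact rr_boost hm φ v
    simp only [G]
    rw [e1]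
    simp only [wmap, e0, FF]
    refine Prod.ext ?_ ?_ <;> funext i <;> fin_cases i <;> simp
    have hb' : cosh φ * rr m v + sinh φ * v 0 ≠ 0 := by rwa [mul_comm (cosh φ), mul_comm (sinh φ)]
    all_goals field_simp
    all_goals try ring_nf
    all_goals linear_combination (x 0 * rr m v) * hc
  refine ⟨FF m (-φ), ?_, ?_, ?_, ?_, ?_⟩
  · rw [hGF]; exact contDiff_FF hm φ
  · exact contDiff_FF hm (-φ)
  · intro p; rw [hGF]; exact FF_comp hm φ p
  · intro p; rw [hGF]
    have := FF_comp hm (-φ) p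
    rwa [neg_neg] at this
  · intro p
    obtain ⟨x, v⟩ := p
    rw [hGF, (hasFDerivAt_FF hm φ x v).fderiv]
    exact det_LL hm φ x v
end
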